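/- arXiv:2603.11491 — 10 statements merged into one kernel-verified Lean document; each statement's English description precedes it below -/
import Mathlib

section
/- Let d ≥ 2 and let G₁ = y · Σ_{i=0}^{d-2} (-1)^i (i+1) x^{d-2-i} y^i in ℚ[x,y]. Then (x+y)²·G₁ ∈ (x^d, y^d), i.e. G₁ belongs to the colon ideal (x^d, y^d) : (x+y)². -/
open MvPolynomial Finset

lemma key_identity (n : ℕ) :
    let x : MvPolynomial (Fin 2) ℚ := X 0
    let y : MvPolynomial (Fin 2) ℚ := X 1
    (x + y) ^ 2 * (y * ∑ i ∈ range (n + 1), C ((-1 : ℚ) ^ i * (i + 1)) * x ^ (n - i) * y ^ i)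
      = y * x ^ (n + 2)
        + (C ((-1 : ℚ) ^ n) * (C ((n : ℚ) + 2) * x + C ((n : ℚ) + 1) * y)) * y ^ (n + 2) := by
  intro x y
  induction n with
  | zero =>
    norm_num [Finset.sum_range_one, map_ofNat]
    ring
  | succ n ih =>
    have hsum : ∑ i ∈ range (n + 1 + 1), C ((-1 : ℚ) ^ i * (i + 1)) * x ^ (n + 1 - i) * y ^ i
        = x * (∑ i ∈ range (n + 1), C ((-1 : ℚ) ^ i * (i + 1)) * x ^ (n - i) * y ^ i)
          + C ((-1 : ℚ) ^ (n + 1) * ((n : ℚ) + 2)) * y ^ (n + 1) := by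
      rw [sum_range_succ, Finset.mul_sum]
      congr 1
      · refine sum_congr rfl fun i hi => ?_
        have hle : i ≤ n := Nat.lt_succ_iff.mp (mem_range.mp hi)
        have h : n + 1 - i = (n - i) + 1 := by omega
        rw [h, pow_succ]
        ring
      · rw [Nat.sub_self, pow_zero]
        push_cast
        ring
    rw [hsum]
    have expand : (x + y) ^ 2 * (y * (x * (∑ i ∈ range (n + 1),
          C ((-1 : ℚ) ^ i * (i + 1)) * x ^ (n - i) * y ^ i)
          + C ((-1 : ℚ) ^ (n + 1) * ((n : ℚ) + 2)) * y ^ (n + 1)))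
        = x * ((x + y) ^ 2 * (y * ∑ i ∈ range (n + 1),
            C ((-1 : ℚ) ^ i * (i + 1)) * x ^ (n - i) * y ^ i))
          + C ((-1 : ℚ) ^ (n + 1) * ((n : ℚ) + 2)) * (x + y) ^ 2 * y ^ (n + 2) := by
      ring
    rw [expand, ih]
    push_cast
    simp only [map_mul, map_add, map_pow, map_one, map_neg, map_ofNat]
    ring

theorem stmt_1 (d : ℕ) (hd : 2 ≤ d) :
    let x : MvPolynomial (Fin 2) ℚ := X 0
    let y : MvPolynomial (Fin 2) ℚ := X 1
    let G₁ : MvPolynomial (Fin 2) ℚ :=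
      y * ∑ i ∈ range (d - 1), C ((-1 : ℚ) ^ i * (i + 1)) * x ^ (d - 2 - i) * y ^ i
    (x + y) ^ 2 * G₁ ∈ Ideal.span {x ^ d, y ^ d} := by
  intro x y G₁
  obtain ⟨n, rfl⟩ : ∃ n, d = n + 2 := ⟨d - 2, by omega⟩
  have h1 : n + 2 - 1 = n + 1 := by omega
  have h2 : ∀ i, n + 2 - 2 - i = n - i := fun i => by omega
  have hG : G₁ = y * ∑ i ∈ range (n + 1), C ((-1 : ℚ) ^ i * (i + 1)) * x ^ (n - i) * y ^ i := by
    simp only [G₁, h1, h2]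
  rw [Ideal.mem_span_pair]
  refine ⟨y, C ((-1 : ℚ) ^ n) * (C ((n : ℚ) + 2) * x + C ((n : ℚ) + 1) * y), ?_⟩
  rw [hG, key_identity n]
end

section
/- Let d ≥ 2 and let G₂ = Σ_{i=0}^{d} (-1)^i (i-1) x^{d-i} y^i in ℚ[x,y]. Then (x+y)²·G₂ ∈ (x^d, y^d). -/
open MvPolynomial Finset

private lemma aux_key (d : ℕ) (hd : 2 ≤ d) :
    (X 0 + X 1 : MvPolynomial (Fin 2) ℚ) ^ 2 *
      ∑ i ∈ range (d + 1), C ((-1 : ℚ) ^ i * ((i : ℚ) - 1)) * X 0 ^ (d - i) * X 1 ^ i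
    = (-(X 0)^2 - 2 * X 0 * X 1) * (X 0) ^ d
      + C ((-1 : ℚ) ^ d) * (C (d : ℚ) * X 0 * X 1 + C ((d : ℚ) - 1) * (X 1)^2) * (X 1) ^ d := by
  induction d, hd using Nat.le_induction with
  | base =>
    simp [Finset.sum_range_succ, map_ofNat]
    ring
  | succ d hd ih =>
    rw [Finset.sum_range_succ]
    have hsum : (∑ i ∈ range (d + 1),
        C ((-1 : ℚ) ^ i * ((i : ℚ) - 1)) * X 0 ^ (d + 1 - i) * X 1 ^ i : MvPolynomial (Fin 2) ℚ)
        = X 0 * ∑ i ∈ range (d + 1), C ((-1 : ℚ) ^ i * ((i : ℚ) - 1)) * X 0 ^ (d - i) * X 1 ^ i := by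
      rw [Finset.mul_sum]
      refine Finset.sum_congr rfl fun i hi => ?_
      have hi' : i ≤ d := Nat.lt_succ_iff.mp (Finset.mem_range.mp hi)
      have h : d + 1 - i = (d - i) + 1 := by omega
      rw [h, pow_succ]
      ring
    rw [hsum, mul_add, mul_comm (X 0), ← mul_assoc, ih]
    push_cast [pow_succ]
    simp only [map_mul, map_add, map_sub, map_one, map_neg, Nat.add_sub_cancel, Nat.sub_self, pow_zero]
    ring

theorem stmt_2 (d : ℕ) (hd : 2 ≤ d) :
    let x : MvPolynomial (Fin 2) ℚ := X 0
    let y : MvPolynomial (Fin 2) ℚ := X 1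
    let G₂ : MvPolynomial (Fin 2) ℚ :=
      ∑ i ∈ range (d + 1), C ((-1 : ℚ) ^ i * ((i : ℚ) - 1)) * x ^ (d - i) * y ^ i
    (x + y) ^ 2 * G₂ ∈ Ideal.span {x ^ d, y ^ d} := by
  intro x y G₂
  rw [Ideal.mem_span_pair]
  exact ⟨-x^2 - 2*x*y, C ((-1 : ℚ) ^ d) * (C (d : ℚ) * x * y + C ((d : ℚ) - 1) * y^2),
    (aux_key d hd).symm⟩
end

section
/- Let P = ℚ[x,y] and I a homogeneous ideal with a minimal free resolution 0 → P² →φ₂ P³ →φ₁ P → P/I → 0, where φ₁ = [x^{d₁}, y^{d₂}, (x+y)^a] and the third row of φ₂ has entries Q₁, Q₂. Then the colon ideal (x^{d₁}, y^{d₂}) : (x+y)^a equals the ideal (Q₁, Q₂), and deg Q₁ + deg Q₂ = d₁ + d₂ − a. -/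
open MvPolynomial Finset

private lemma mv_unit_eq_C {u : MvPolynomial (Fin 2) ℚ} (hu : IsUnit u) :
    ∃ c : ℚ, u = C c := by
  have h2 : IsUnit (finSuccEquiv ℚ 1 u) := hu.map (finSuccEquiv ℚ 1)
  rw [Polynomial.isUnit_iff] at h2
  obtain ⟨r, hr, hCr⟩ := h2
  have h3 : IsUnit (finSuccEquiv ℚ 0 r) := hr.map (finSuccEquiv ℚ 0)
  rw [Polynomial.isUnit_iff] at h3
  obtain ⟨s, hs, hCs⟩ := h3
  obtain ⟨c, rfl⟩ := C_surjective (Fin 0) s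
  refine ⟨c, ?_⟩
  have hr' : r = C c := by
    apply (finSuccEquiv ℚ 0).injective
    rw [← hCs]
    simp [finSuccEquiv_apply]
  apply (finSuccEquiv ℚ 1).injective
  rw [← hCr, hr']
  simp [finSuccEquiv_apply]

private lemma prime_X0 : Prime (X 0 : MvPolynomial (Fin 2) ℚ) := by
  rw [← MulEquiv.prime_iff (finSuccEquiv ℚ 1).toMulEquiv]
  have : (finSuccEquiv ℚ 1).toMulEquiv (X 0) = Polynomial.X := finSuccEquiv_X_zero
  rw [this]
  exact Polynomial.prime_X

private lemma prime_X1 : Prime (X 1 : MvPolynomial (Fin 2) ℚ) := by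
  rw [← MulEquiv.prime_iff (renameEquiv ℚ (Equiv.swap (0 : Fin 2) 1)).toMulEquiv]
  have : (renameEquiv ℚ (Equiv.swap (0 : Fin 2) 1)).toMulEquiv (X 1)
      = (X 0 : MvPolynomial (Fin 2) ℚ) := by
    simp [renameEquiv_apply, rename_X]
  rw [this]
  exact prime_X0

private lemma three_term {p q r : MvPolynomial (Fin 2) ℚ} {np nq nr : ℕ}
    (hp : p.IsHomogeneous np) (hq : q.IsHomogeneous nq) (hr : r.IsHomogeneous nr)
    (h : p + q + r = 0) (hq0 : q ≠ 0) (hr0 : r ≠ 0) : nq = nr := by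
  by_contra hne
  have comp : ∀ m : ℕ, homogeneousComponent m p + homogeneousComponent m q
      + homogeneousComponent m r = 0 := by
    intro m
    have := congrArg (homogeneousComponent m) h
    rwa [map_add, map_add, map_zero] at this
  have cp : ∀ m : ℕ, homogeneousComponent m p = if m = np then p else 0 :=
    fun m => homogeneousComponent_of_mem ((mem_homogeneousSubmodule _ _).mpr hp)
  have cq : ∀ m : ℕ, homogeneousComponent m q = if m = nq then q else 0 :=
    fun m => homogeneousComponent_of_mem ((mem_homogeneousSubmodule _ _).mpr hq)
  have cr : ∀ m : ℕ, homogeneousComponent m r = if m = nr then r else 0 :=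
    fun m => homogeneousComponent_of_mem ((mem_homogeneousSubmodule _ _).mpr hr)
  by_cases hpq : np = nq
  · -- then r is isolated at degree nr
    have h' := comp nr
    rw [cp nr, cq nr, cr nr, if_neg (by omega), if_neg (by omega), if_pos rfl] at h'
    simp only [zero_add] at h'
    exact hr0 h'
  · have h' := comp nq
    rw [cp nq, cq nq, cr nq, if_neg (by omega), if_pos rfl, if_neg (by omega)] at h'
    simp only [zero_add, add_zero] at h'
    exact hq0 h'

private lemma homog_dvd_X_pow {i : Fin 2} {D : MvPolynomial (Fin 2) ℚ} {N n : ℕ}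
    (hprime : Prime (X i : MvPolynomial (Fin 2) ℚ))
    (hD : D.IsHomogeneous n) (hD0 : D ≠ 0) (hdvd : D ∣ (X i) ^ N) :
    ∃ c : ℚ, c ≠ 0 ∧ D = C c * (X i) ^ n := by
  obtain ⟨k, hkN, hassoc⟩ := (dvd_prime_pow hprime N).mp hdvd
  obtain ⟨u, hu⟩ := hassoc
  obtain ⟨c, hc⟩ := mv_unit_eq_C (Units.isUnit u⁻¹)
  have hD' : D = C c * X i ^ k := by
    calc D = D * (↑u * ↑u⁻¹) := by simp
    _ = (D * ↑u) * ↑u⁻¹ := by ring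
    _ = X i ^ k * ↑u⁻¹ := by rw [hu]
    _ = C c * X i ^ k := by rw [hc]; ring
  have hc0 : c ≠ 0 := by
    rintro rfl
    simp only [map_zero, zero_mul] at hD'
    exact hD0 hD'
  have hk : IsHomogeneous (C c * X i ^ k : MvPolynomial (Fin 2) ℚ) k := by
    simpa using (isHomogeneous_C _ c).mul ((isHomogeneous_X _ i).pow k)
  have hnk : n = k := hD.inj_right (hD' ▸ hk) hD0
  exact ⟨c, hc0, by rw [hD', hnk]⟩

/-- Hilbert–Burch setting for `I = (x^{d₁}, y^{d₂}, (x+y)^a)` in `ℚ[x,y]`: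
the colon ideal `(x^{d₁}, y^{d₂}) : (x+y)^a` is generated by the entries `Q₁, Q₂`
of the last row of the syzygy matrix `φ₂`, and `deg Q₁ + deg Q₂ = d₁ + d₂ - a`. -/
theorem stmt_4 (d₁ d₂ a : ℕ) (hd₁ : 2 ≤ d₁) (hd₂ : 2 ≤ d₂)
    (ha : 1 ≤ a) (ha' : a ≤ d₁ + d₂ - 2)
    (φ₂ : Matrix (Fin 3) (Fin 2) (MvPolynomial (Fin 2) ℚ))
    (gens : Fin 3 → MvPolynomial (Fin 2) ℚ)
    (hgens : gens = ![(X 0 : MvPolynomial (Fin 2) ℚ) ^ d₁, (X 1) ^ d₂, (X 0 + X 1) ^ a])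
    -- the columns of φ₂ are syzygies of the generators
    (hsyz : ∀ j : Fin 2, ∑ i : Fin 3, gens i * φ₂ i j = 0)
    -- every syzygy is a P-combination of the columns of φ₂ (exactness of the resolution)
    (hexact : ∀ v : Fin 3 → MvPolynomial (Fin 2) ℚ,
      (∑ i : Fin 3, gens i * v i = 0) →
      ∃ c : Fin 2 → MvPolynomial (Fin 2) ℚ, ∀ i, v i = ∑ j : Fin 2, φ₂ i j * c j)
    (q₁ q₂ : ℕ)
    (hQ₁ : MvPolynomial.IsHomogeneous (φ₂ 2 0) q₁)
    (hQ₂ : MvPolynomial.IsHomogeneous (φ₂ 2 1) q₂)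
    (hQ₁0 : φ₂ 2 0 ≠ 0) (hQ₂0 : φ₂ 2 1 ≠ 0)
    -- homogeneity of the matrix entries
    (hhom : ∀ i : Fin 3, ∀ j : Fin 2, ∃ e : ℕ, MvPolynomial.IsHomogeneous (φ₂ i j) e) :
    (∀ g : MvPolynomial (Fin 2) ℚ,
      g * (X 0 + X 1) ^ a ∈ Ideal.span {(X 0 : MvPolynomial (Fin 2) ℚ) ^ d₁, (X 1) ^ d₂}
        ↔ g ∈ Ideal.span {φ₂ 2 0, φ₂ 2 1}) ∧
    q₁ + q₂ = d₁ + d₂ - a := by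
  subst hgens
  -- the two column syzygies, written out
  have s0 : X 0 ^ d₁ * φ₂ 0 0 + X 1 ^ d₂ * φ₂ 1 0 + (X 0 + X 1) ^ a * φ₂ 2 0 = 0 := by
    have := hsyz 0
    simpa [Fin.sum_univ_three] using this
  have s1 : X 0 ^ d₁ * φ₂ 0 1 + X 1 ^ d₂ * φ₂ 1 1 + (X 0 + X 1) ^ a * φ₂ 2 1 = 0 := by
    have := hsyz 1
    simpa [Fin.sum_univ_three] using this
  constructor
  · -- Part 1 : the colon ideal
    intro g
    constructor
    · intro hg
      rw [Ideal.mem_span_pair] at hg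
      obtain ⟨cc, dd, hcd⟩ := hg
      obtain ⟨c, hc⟩ := hexact ![-cc, -dd, g] (by
        simp only [Fin.sum_univ_three, Matrix.cons_val_zero, Matrix.cons_val_one,
          Matrix.head_cons, Matrix.cons_val_two, Matrix.tail_cons]
        linear_combination -hcd)
      have h2 := hc 2
      simp only [Fin.sum_univ_two, Matrix.cons_val_two, Matrix.tail_cons, Matrix.head_cons] at h2
      rw [Ideal.mem_span_pair]
      exact ⟨c 0, c 1, by linear_combination -h2⟩
    · intro hg
      rw [Ideal.mem_span_pair] at hg
      obtain ⟨cc, dd, h⟩ := hg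
      rw [Ideal.mem_span_pair]
      refine ⟨-(cc * φ₂ 0 0 + dd * φ₂ 0 1), -(cc * φ₂ 1 0 + dd * φ₂ 1 1), ?_⟩
      linear_combination (-cc) * s0 + (-dd) * s1 + ((X 0 + X 1) ^ a) * h
  · -- Part 2 : the degrees
    obtain ⟨α0, hα0⟩ := hhom 0 0
    obtain ⟨α1, hα1⟩ := hhom 0 1
    obtain ⟨β0, hβ0⟩ := hhom 1 0
    obtain ⟨β1, hβ1⟩ := hhom 1 1
    have hX0 : IsHomogeneous ((X 0 : MvPolynomial (Fin 2) ℚ) ^ d₁) d₁ := by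
      simpa using (isHomogeneous_X ℚ (0 : Fin 2)).pow d₁
    have hX1 : IsHomogeneous ((X 1 : MvPolynomial (Fin 2) ℚ) ^ d₂) d₂ := by
      simpa using (isHomogeneous_X ℚ (1 : Fin 2)).pow d₂
    have hWa : IsHomogeneous ((X 0 + X 1 : MvPolynomial (Fin 2) ℚ) ^ a) a := by
      simpa using ((isHomogeneous_X ℚ (0 : Fin 2)).add (isHomogeneous_X ℚ (1 : Fin 2))).pow a
    have hWne : (X 0 + X 1 : MvPolynomial (Fin 2) ℚ) ≠ 0 := by
      intro h
      have := congrArg (eval fun _ => (1 : ℚ)) h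
      simp at this
    have hWa0 : ((X 0 + X 1 : MvPolynomial (Fin 2) ℚ) ^ a) ≠ 0 := pow_ne_zero _ hWne
    have hX0ne : ((X 0 : MvPolynomial (Fin 2) ℚ) ^ d₁) ≠ 0 := pow_ne_zero _ (X_ne_zero _)
    have hX1ne : ((X 1 : MvPolynomial (Fin 2) ℚ) ^ d₂) ≠ 0 := pow_ne_zero _ (X_ne_zero _)
    -- degree relations for nonzero entries
    have degB0 : φ₂ 1 0 ≠ 0 → d₂ + β0 = a + q₁ := fun hne =>
      three_term (hX0.mul hα0) (hX1.mul hβ0) (hWa.mul hQ₁) s0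
        (mul_ne_zero hX1ne hne) (mul_ne_zero hWa0 hQ₁0)
    have degB1 : φ₂ 1 1 ≠ 0 → d₂ + β1 = a + q₂ := fun hne =>
      three_term (hX0.mul hα1) (hX1.mul hβ1) (hWa.mul hQ₂) s1
        (mul_ne_zero hX1ne hne) (mul_ne_zero hWa0 hQ₂0)
    have degA0 : φ₂ 0 0 ≠ 0 → d₁ + α0 = a + q₁ := fun hne =>
      three_term (hX1.mul hβ0) (hX0.mul hα0) (hWa.mul hQ₁) (by linear_combination s0)
        (mul_ne_zero hX0ne hne) (mul_ne_zero hWa0 hQ₁0)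
    have degA1 : φ₂ 0 1 ≠ 0 → d₁ + α1 = a + q₂ := fun hne =>
      three_term (hX1.mul hβ1) (hX0.mul hα1) (hWa.mul hQ₂) (by linear_combination s1)
        (mul_ne_zero hX0ne hne) (mul_ne_zero hWa0 hQ₂0)
    -- the Koszul syzygies are combinations of the columns
    obtain ⟨c12, h12⟩ := hexact ![X 1 ^ d₂, -(X 0 ^ d₁), 0] (by
      simp only [Fin.sum_univ_three, Matrix.cons_val_zero, Matrix.cons_val_one,
        Matrix.head_cons, Matrix.cons_val_two, Matrix.tail_cons]
      ring)
    obtain ⟨c13, h13⟩ := hexact ![(X 0 + X 1) ^ a, 0, -(X 0 ^ d₁)] (by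
      simp only [Fin.sum_univ_three, Matrix.cons_val_zero, Matrix.cons_val_one,
        Matrix.head_cons, Matrix.cons_val_two, Matrix.tail_cons]
      ring)
    obtain ⟨c23, h23⟩ := hexact ![0, (X 0 + X 1) ^ a, -(X 1 ^ d₂)] (by
      simp only [Fin.sum_univ_three, Matrix.cons_val_zero, Matrix.cons_val_one,
        Matrix.head_cons, Matrix.cons_val_two, Matrix.tail_cons]
      ring)
    have e0 : (X 1 : MvPolynomial (Fin 2) ℚ) ^ d₂ = φ₂ 0 0 * c12 0 + φ₂ 0 1 * c12 1 := by
      have := h12 0; simpa [Fin.sum_univ_two] using this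
    have e1 : -((X 0 : MvPolynomial (Fin 2) ℚ) ^ d₁) = φ₂ 1 0 * c12 0 + φ₂ 1 1 * c12 1 := by
      have := h12 1; simpa [Fin.sum_univ_two] using this
    have e2 : (0 : MvPolynomial (Fin 2) ℚ) = φ₂ 2 0 * c12 0 + φ₂ 2 1 * c12 1 := by
      have := h12 2; simpa [Fin.sum_univ_two] using this
    have f1 : (0 : MvPolynomial (Fin 2) ℚ) = φ₂ 1 0 * c13 0 + φ₂ 1 1 * c13 1 := by
      have := h13 1; simpa [Fin.sum_univ_two] using this
    have f2 : -((X 0 : MvPolynomial (Fin 2) ℚ) ^ d₁) = φ₂ 2 0 * c13 0 + φ₂ 2 1 * c13 1 := by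
      have := h13 2; simpa [Fin.sum_univ_two] using this
    have g0 : (0 : MvPolynomial (Fin 2) ℚ) = φ₂ 0 0 * c23 0 + φ₂ 0 1 * c23 1 := by
      have := h23 0; simpa [Fin.sum_univ_two] using this
    have g2 : -((X 1 : MvPolynomial (Fin 2) ℚ) ^ d₂) = φ₂ 2 0 * c23 0 + φ₂ 2 1 * c23 1 := by
      have := h23 2; simpa [Fin.sum_univ_two] using this
    -- the key determinant identities
    have key1 : (X 0 : MvPolynomial (Fin 2) ℚ) ^ d₁ * X 0 ^ d₁
        = (c12 0 * c13 1 - c12 1 * c13 0) * (φ₂ 1 0 * φ₂ 2 1 - φ₂ 1 1 * φ₂ 2 0) := by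
      linear_combination (φ₂ 2 0 * c13 0 + φ₂ 2 1 * c13 1) * e1
        - (φ₂ 2 0 * c12 0 + φ₂ 2 1 * c12 1) * f1 - (X 0 : MvPolynomial (Fin 2) ℚ) ^ d₁ * f2
    have key2 : (X 1 : MvPolynomial (Fin 2) ℚ) ^ d₂ * X 1 ^ d₂
        = (c12 1 * c23 0 - c12 0 * c23 1) * (φ₂ 0 0 * φ₂ 2 1 - φ₂ 0 1 * φ₂ 2 0) := by
      linear_combination (-(φ₂ 2 0 * c23 0 + φ₂ 2 1 * c23 1)) * e0
        + (φ₂ 2 0 * c12 0 + φ₂ 2 1 * c12 1) * g0 - (X 1 : MvPolynomial (Fin 2) ℚ) ^ d₂ * g2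
    have key3 : (X 0 : MvPolynomial (Fin 2) ℚ) ^ d₁ * (φ₂ 0 0 * φ₂ 2 1 - φ₂ 0 1 * φ₂ 2 0)
        + X 1 ^ d₂ * (φ₂ 1 0 * φ₂ 2 1 - φ₂ 1 1 * φ₂ 2 0) = 0 := by
      linear_combination φ₂ 2 1 * s0 - φ₂ 2 0 * s1
    -- nonvanishing of the minors
    have hD₁0 : φ₂ 1 0 * φ₂ 2 1 - φ₂ 1 1 * φ₂ 2 0 ≠ 0 := by
      intro h
      rw [h, mul_zero] at key1
      exact mul_ne_zero hX0ne hX0ne key1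
    have hD₂0 : φ₂ 0 0 * φ₂ 2 1 - φ₂ 0 1 * φ₂ 2 0 ≠ 0 := by
      intro h
      rw [h, mul_zero] at key2
      exact mul_ne_zero hX1ne hX1ne key2
    have hD₁dvd : (φ₂ 1 0 * φ₂ 2 1 - φ₂ 1 1 * φ₂ 2 0) ∣ (X 0 : MvPolynomial (Fin 2) ℚ) ^ (d₁ + d₁) :=
      ⟨c12 0 * c13 1 - c12 1 * c13 0, by rw [pow_add, key1]; ring⟩
    have hD₂dvd : (φ₂ 0 0 * φ₂ 2 1 - φ₂ 0 1 * φ₂ 2 0) ∣ (X 1 : MvPolynomial (Fin 2) ℚ) ^ (d₂ + d₂) :=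
      ⟨c12 1 * c23 0 - c12 0 * c23 1, by rw [pow_add, key2]; ring⟩
    -- homogeneity of the minors and their degrees
    have hcase1 : ∃ m, (φ₂ 1 0 * φ₂ 2 1 - φ₂ 1 1 * φ₂ 2 0).IsHomogeneous m
        ∧ m + d₂ = a + q₁ + q₂ := by
      by_cases hB0 : φ₂ 1 0 = 0
      · have hB1 : φ₂ 1 1 ≠ 0 := fun h1 => hD₁0 (by rw [hB0, h1]; ring)
        refine ⟨β1 + q₁, ?_, by have := degB1 hB1; omega⟩
        rw [hB0, zero_mul, zero_sub]
        exact (hβ1.mul hQ₁).neg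
      · have h0 := degB0 hB0
        refine ⟨β0 + q₂, ?_, by omega⟩
        apply (hβ0.mul hQ₂).sub
        by_cases hB1 : φ₂ 1 1 = 0
        · rw [hB1, zero_mul]
          exact isHomogeneous_zero _ _ _
        · have h1 := degB1 hB1
          have heq : β1 + q₁ = β0 + q₂ := by omega
          exact heq ▸ (hβ1.mul hQ₁)
    have hcase2 : ∃ m, (φ₂ 0 0 * φ₂ 2 1 - φ₂ 0 1 * φ₂ 2 0).IsHomogeneous m
        ∧ m + d₁ = a + q₁ + q₂ := by
      by_cases hA0 : φ₂ 0 0 = 0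
      · have hA1 : φ₂ 0 1 ≠ 0 := fun h1 => hD₂0 (by rw [hA0, h1]; ring)
        refine ⟨α1 + q₁, ?_, by have := degA1 hA1; omega⟩
        rw [hA0, zero_mul, zero_sub]
        exact (hα1.mul hQ₁).neg
      · have h0 := degA0 hA0
        refine ⟨α0 + q₂, ?_, by omega⟩
        apply (hα0.mul hQ₂).sub
        by_cases hA1 : φ₂ 0 1 = 0
        · rw [hA1, zero_mul]
          exact isHomogeneous_zero _ _ _
        · have h1 := degA1 hA1
          have heq : α1 + q₁ = α0 + q₂ := by omega
          exact heq ▸ (hα1.mul hQ₁)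
    obtain ⟨m₁, hm₁, hm₁d⟩ := hcase1
    obtain ⟨m₂, hm₂, hm₂d⟩ := hcase2
    obtain ⟨c, hc0, hDc⟩ := homog_dvd_X_pow prime_X0 hm₁ hD₁0 hD₁dvd
    obtain ⟨c', hc'0, hDc'⟩ := homog_dvd_X_pow prime_X1 hm₂ hD₂0 hD₂dvd
    rw [hDc, hDc'] at key3
    -- rewrite as monomials and compare exponents
    have t1 : (X 0 : MvPolynomial (Fin 2) ℚ) ^ d₁ * (C c' * X 1 ^ m₂)
        = monomial (Finsupp.single 0 d₁ + Finsupp.single 1 m₂) c' := by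
      rw [X_pow_eq_monomial, X_pow_eq_monomial, C_mul_monomial, monomial_mul]
      simp
    have t2 : (X 1 : MvPolynomial (Fin 2) ℚ) ^ d₂ * (C c * X 0 ^ m₁)
        = monomial (Finsupp.single 0 m₁ + Finsupp.single 1 d₂) c := by
      rw [X_pow_eq_monomial, X_pow_eq_monomial, C_mul_monomial, monomial_mul]
      rw [add_comm (Finsupp.single (1 : Fin 2) d₂)]
      simp
    rw [t1, t2] at key3
    have hee : (Finsupp.single (0 : Fin 2) m₁ + Finsupp.single (1 : Fin 2) d₂)
        = (Finsupp.single (0 : Fin 2) d₁ + Finsupp.single (1 : Fin 2) m₂) := by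
      by_contra hne
      have hco := congrArg (coeff (Finsupp.single (0 : Fin 2) d₁ + Finsupp.single (1 : Fin 2) m₂)) key3
      rw [coeff_add, coeff_monomial, coeff_monomial, if_pos rfl, if_neg hne, coeff_zero,
        add_zero] at hco
      exact hc'0 hco
    have hm₁eq : m₁ = d₁ := by
      have := DFunLike.congr_fun hee (0 : Fin 2)
      simpa [Finsupp.single_apply] using this
    omega
end

section
/- Let HF(t) = #{(i,j) ∈ ℕ² : i + j = t, i < d₁, j < d₂} be the Hilbert function of ℚ[x,y]/(x^{d₁}, y^{d₂}), where 2 ≤ d₁ ≤ d₂ and k = d₂ − d₁, and fix a ≥ 1. If a ≤ k, then the least t ≥ 0 with HF(t) > HF(t + a) is t = d₂ − a; if a ≥ k + 1, the least such t is t = d₂ − ⌈(a+k)/2⌉. -/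
open Finset

lemma HF_closed (d₁ d₂ t : ℕ) :
    ((range d₁ ×ˢ range d₂).filter (fun p => p.1 + p.2 = t)).card
      = min d₁ (t + 1) - (t + 1 - d₂) := by
  have hset : ((range d₁ ×ˢ range d₂).filter (fun p => p.1 + p.2 = t))
      = (Finset.Ico (t + 1 - d₂) (min d₁ (t + 1))).image (fun i => (i, t - i)) := by
    ext ⟨i, j⟩
    simp only [Finset.mem_filter, Finset.mem_product, Finset.mem_range, Finset.mem_image,
      Finset.mem_Ico, Prod.mk.injEq]
    constructor
    · rintro ⟨⟨hi, hj⟩, ht⟩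
      exact ⟨i, by omega, rfl, by omega⟩
    · rintro ⟨x, ⟨h1, h2⟩, rfl, rfl⟩
      omega
  rw [hset, Finset.card_image_of_injective, Nat.card_Ico]
  intro a b h
  exact (Prod.mk.injEq _ _ _ _ ▸ h).1

theorem stmt_7 (d₁ d₂ a : ℕ) (hd₁ : 2 ≤ d₁) (h12 : d₁ ≤ d₂) (k : ℕ) (hk : k = d₂ - d₁)
    (ha : 1 ≤ a) :
    let HF : ℕ → ℕ := fun t =>
      ((range d₁ ×ˢ range d₂).filter (fun p => p.1 + p.2 = t)).card
    (a ≤ k → IsLeast {t : ℕ | HF (t + a) < HF t} (d₂ - a)) ∧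
    (k + 1 ≤ a → IsLeast {t : ℕ | HF (t + a) < HF t} (d₂ - (a + k + 1) / 2)) := by
  intro HF
  have hHF : ∀ t, HF t = min d₁ (t + 1) - (t + 1 - d₂) := fun t => HF_closed d₁ d₂ t
  constructor
  · intro hak
    constructor
    · show HF _ < HF _
      rw [hHF, hHF]; omega
    · intro t ht
      have ht' : HF (t + a) < HF t := ht
      rw [hHF, hHF] at ht'
      omega
  · intro hak
    constructor
    · show HF _ < HF _
      rw [hHF, hHF]; omega
    · intro t ht
      have ht' : HF (t + a) < HF t := ht
      rw [hHF, hHF] at ht'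
      omega
end

section
/- Let d ≥ 2, let a ≥ 2 be even, set b = a/2, and in ℚ[x,y] define F₁ = Σ_i (-1)^i binom(d-1-i, b) binom(b+i, b) x^{d-b-1-i} y^i, G₁ = y Σ_i (-1)^i binom(d-2-i, b-1) binom(b+i, b) x^{d-b-1-i} y^i, and G₂ = Σ_i (-1)^i binom(d-1-i, b-1) binom(b-1+i, b-1) (i−1) x^{d-b-i} y^i. Then b·(x+y)·F₁ = b(b+2−d)·G₁ + (b−d)·G₂. -/
open MvPolynomial Finset

lemma scalar0 (d b : ℕ) (hb : 1 ≤ b) (hbd : b + 1 ≤ d) :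
    (b : ℚ) * ((d - 1).choose b) = ((d : ℚ) - b) * ((d - 1).choose (b - 1)) := by
  have h := Nat.choose_succ_right_eq (d - 1) (b - 1)
  have e1 : b - 1 + 1 = b := by omega
  have e2 : d - 1 - (b - 1) = d - b := by omega
  rw [e1, e2] at h
  have e3 : ((d : ℚ) - b) = ((d - b : ℕ) : ℚ) := by
    have : b ≤ d := by omega
    push_cast [Nat.cast_sub this]; ring
  rw [e3]
  have hq : ((d - 1).choose b : ℚ) * b = ((d - 1).choose (b - 1) : ℚ) * ((d - b : ℕ) : ℚ) := by
    exact_mod_cast congrArg (Nat.cast : ℕ → ℚ) h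
  linear_combination hq

lemma scalarS (d b j : ℕ) (hb : 1 ≤ b) (hj : b + j + 1 ≤ d) :
    (b : ℚ) * ((-1 : ℚ) ^ (j+1) * ((d - 1 - (j+1)).choose b) * ((b + (j+1)).choose b))
      + (b : ℚ) * ((-1 : ℚ) ^ j * ((d - 1 - j).choose b) * ((b + j).choose b))
    = (b : ℚ) * ((b : ℚ) + 2 - d) * ((-1 : ℚ) ^ j * ((d - 2 - j).choose (b - 1)) * ((b + j).choose b))
      + ((b : ℚ) - d) * ((-1 : ℚ) ^ (j+1) * ((d - 1 - (j+1)).choose (b - 1))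
          * ((b - 1 + (j+1)).choose (b - 1)) * (((j+1 : ℕ) : ℚ) - 1)) := by
  obtain ⟨s, rfl⟩ : ∃ s, d = b + j + 1 + s := ⟨d - (b+j+1), by omega⟩
  have e1 : b + j + 1 + s - 1 - (j + 1) = b + s - 1 := by omega
  have e2 : b + j + 1 + s - 1 - j = b + s := by omega
  have e3 : b + j + 1 + s - 2 - j = b + s - 1 := by omega
  have e4 : b - 1 + (j + 1) = b + j := by omega
  rw [e1, e2, e3, e4]
  cases s with
  | zero =>
    have c1 : (b + 0 - 1).choose b = 0 := Nat.choose_eq_zero_of_lt (by omega)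
    have c2 : (b + 0).choose b = 1 := by simp
    have c3 : (b + 0 - 1).choose (b - 1) = 1 := by
      have : b + 0 - 1 = b - 1 := by omega
      rw [this, Nat.choose_self]
    rw [c1, c2, c3]
    have h := Nat.choose_succ_right_eq (b + j) (b - 1)
    have e5 : b - 1 + 1 = b := by omega
    have e6 : b + j - (b - 1) = j + 1 := by omega
    rw [e5, e6] at h
    have hq : ((b + j).choose b : ℚ) * b = ((b + j).choose (b - 1) : ℚ) * (j + 1) := by
      exact_mod_cast congrArg (Nat.cast : ℕ → ℚ) h
    push_cast
    linear_combination ((-1 : ℚ) ^ j * j) * hq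
  | succ t =>
    obtain ⟨c, rfl⟩ : ∃ c, b = c + 1 := ⟨b - 1, by omega⟩
    have e5 : c + 1 + (t + 1) - 1 = c + 1 + t := by omega
    rw [e5]
    have s1 : c + 1 - 1 = c := by omega
    rw [s1]
    have g1 : c + 1 + (t + 1) = c + 1 + t + 1 := by omega
    have g2 : c + 1 + (j + 1) = c + 1 + j + 1 := by omega
    rw [g1, g2]
    rw [Nat.cast_choose ℚ (show c + 1 ≤ c + 1 + t + 1 by omega),
        Nat.cast_choose ℚ (show c + 1 ≤ c + 1 + t by omega),
        Nat.cast_choose ℚ (show c ≤ c + 1 + t by omega),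
        Nat.cast_choose ℚ (show c + 1 ≤ c + 1 + j + 1 by omega),
        Nat.cast_choose ℚ (show c + 1 ≤ c + 1 + j by omega),
        Nat.cast_choose ℚ (show c ≤ c + 1 + j by omega)]
    have r1 : c + 1 + t + 1 - (c + 1) = t + 1 := by omega
    have r2 : c + 1 + t - (c + 1) = t := by omega
    have r3 : c + 1 + t - c = t + 1 := by omega
    have r4 : c + 1 + j + 1 - (c + 1) = j + 1 := by omega
    have r5 : c + 1 + j - (c + 1) = j := by omega
    have r6 : c + 1 + j - c = j + 1 := by omega
    rw [r1, r2, r3, r4, r5, r6]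
    have f1 : ((c + 1 + t + 1).factorial : ℚ) = (c + t + 2) * (c + 1 + t).factorial := by
      rw [Nat.factorial_succ]; push_cast; ring
    have f2 : ((c + 1 + j + 1).factorial : ℚ) = (c + j + 2) * (c + 1 + j).factorial := by
      rw [Nat.factorial_succ]; push_cast; ring
    have f3 : ((c + 1).factorial : ℚ) = (c + 1) * c.factorial := by
      rw [Nat.factorial_succ]; push_cast; ring
    have f4 : ((t + 1).factorial : ℚ) = (t + 1) * t.factorial := by
      rw [Nat.factorial_succ]; push_cast; ring
    have f5 : ((j + 1).factorial : ℚ) = (j + 1) * j.factorial := by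
      rw [Nat.factorial_succ]; push_cast; ring
    rw [f1, f2, f3, f4, f5]
    have n1 : ((c + 1 + t).factorial : ℚ) ≠ 0 := Nat.cast_ne_zero.2 (Nat.factorial_ne_zero _)
    have n2 : ((c + 1 + j).factorial : ℚ) ≠ 0 := Nat.cast_ne_zero.2 (Nat.factorial_ne_zero _)
    have n3 : (c.factorial : ℚ) ≠ 0 := Nat.cast_ne_zero.2 (Nat.factorial_ne_zero _)
    have n4 : (t.factorial : ℚ) ≠ 0 := Nat.cast_ne_zero.2 (Nat.factorial_ne_zero _)
    have n5 : (j.factorial : ℚ) ≠ 0 := Nat.cast_ne_zero.2 (Nat.factorial_ne_zero _)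
    have n6 : (c : ℚ) + 1 ≠ 0 := by positivity
    have n7 : (t : ℚ) + 1 ≠ 0 := by positivity
    have n8 : (j : ℚ) + 1 ≠ 0 := by positivity
    push_cast
    field_simp
    ring


/-- The key inductive identity `b(x+y)F₁ = b(b+2-d)G₁ + (b-d)G₂` for even `a = 2b`. -/
theorem stmt_10 (d a b : ℕ) (hd : 2 ≤ d) (ha : 2 ≤ a) (hae : a = 2 * b) :
    let x : MvPolynomial (Fin 2) ℚ := X 0
    let y : MvPolynomial (Fin 2) ℚ := X 1
    let F₁ : MvPolynomial (Fin 2) ℚ := ∑ i ∈ range (d - b),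
      C ((-1 : ℚ) ^ i * (Nat.choose (d - 1 - i) b) * (Nat.choose (b + i) b))
        * x ^ (d - b - 1 - i) * y ^ i
    let G₁ : MvPolynomial (Fin 2) ℚ := y * ∑ i ∈ range (d - b),
      C ((-1 : ℚ) ^ i * (Nat.choose (d - 2 - i) (b - 1)) * (Nat.choose (b + i) b))
        * x ^ (d - b - 1 - i) * y ^ i
    let G₂ : MvPolynomial (Fin 2) ℚ := ∑ i ∈ range (d - b + 1),
      C ((-1 : ℚ) ^ i * (Nat.choose (d - 1 - i) (b - 1)) * (Nat.choose (b - 1 + i) (b - 1))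
          * ((i : ℚ) - 1))
        * x ^ (d - b - i) * y ^ i
    C (b : ℚ) * ((x + y) * F₁)
      = C ((b : ℚ) * ((b : ℚ) + 2 - d)) * G₁ + C ((b : ℚ) - d) * G₂ := by
  intro x y F₁ G₁ G₂
  have hb : 1 ≤ b := by omega
  have hF : F₁ = ∑ i ∈ range (d - b),
      C ((-1 : ℚ) ^ i * (Nat.choose (d - 1 - i) b) * (Nat.choose (b + i) b))
        * x ^ (d - b - 1 - i) * y ^ i := rfl
  have hG1 : G₁ = y * ∑ i ∈ range (d - b),
      C ((-1 : ℚ) ^ i * (Nat.choose (d - 2 - i) (b - 1)) * (Nat.choose (b + i) b))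
        * x ^ (d - b - 1 - i) * y ^ i := rfl
  have hG2 : G₂ = ∑ i ∈ range (d - b + 1),
      C ((-1 : ℚ) ^ i * (Nat.choose (d - 1 - i) (b - 1)) * (Nat.choose (b - 1 + i) (b - 1))
          * ((i : ℚ) - 1))
        * x ^ (d - b - i) * y ^ i := rfl
  rw [hF, hG1, hG2]
  by_cases hbd : b + 1 ≤ d
  · -- main case
    obtain ⟨M, hM⟩ : ∃ M, d - b = M + 1 := ⟨d - b - 1, by omega⟩
    rw [hM]
    simp only [Nat.add_sub_cancel]
    -- split (x+y)
    rw [add_mul]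
    -- x-part
    have hx : x * (∑ i ∈ range (M + 1),
        C ((-1 : ℚ) ^ i * (Nat.choose (d - 1 - i) b) * (Nat.choose (b + i) b))
          * x ^ (M - i) * y ^ i)
        = ∑ i ∈ range (M + 1),
        C ((-1 : ℚ) ^ i * (Nat.choose (d - 1 - i) b) * (Nat.choose (b + i) b))
          * x ^ (M + 1 - i) * y ^ i := by
      rw [Finset.mul_sum]
      refine sum_congr rfl fun i hi => ?_
      have hiM : i ≤ M := by have := mem_range.mp hi; omega
      have e : M + 1 - i = (M - i) + 1 := by omega
      rw [e, pow_succ]; ring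
    have hy : y * (∑ i ∈ range (M + 1),
        C ((-1 : ℚ) ^ i * (Nat.choose (d - 1 - i) b) * (Nat.choose (b + i) b))
          * x ^ (M - i) * y ^ i)
        = ∑ i ∈ range (M + 1),
        C ((-1 : ℚ) ^ i * (Nat.choose (d - 1 - i) b) * (Nat.choose (b + i) b))
          * x ^ (M - i) * y ^ (i + 1) := by
      rw [Finset.mul_sum]
      exact sum_congr rfl fun i _ => by rw [pow_succ]; ring
    have hyB : y * (∑ i ∈ range (M + 1),
        C ((-1 : ℚ) ^ i * (Nat.choose (d - 2 - i) (b - 1)) * (Nat.choose (b + i) b))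
          * x ^ (M - i) * y ^ i)
        = ∑ i ∈ range (M + 1),
        C ((-1 : ℚ) ^ i * (Nat.choose (d - 2 - i) (b - 1)) * (Nat.choose (b + i) b))
          * x ^ (M - i) * y ^ (i + 1) := by
      rw [Finset.mul_sum]
      exact sum_congr rfl fun i _ => by rw [pow_succ]; ring
    rw [hx, hy, hyB]
    -- reindex the x-part sum
    have h1 : (∑ i ∈ range (M + 1),
        C ((-1 : ℚ) ^ i * (Nat.choose (d - 1 - i) b) * (Nat.choose (b + i) b))
          * x ^ (M + 1 - i) * y ^ i)
        = (∑ i ∈ range (M + 1),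
            C ((-1 : ℚ) ^ (i + 1) * (Nat.choose (d - 1 - (i + 1)) b) * (Nat.choose (b + (i + 1)) b))
              * x ^ (M - i) * y ^ (i + 1))
          + C ((-1 : ℚ) ^ 0 * (Nat.choose (d - 1 - 0) b) * (Nat.choose (b + 0) b))
              * x ^ (M + 1 - 0) * y ^ 0 := by
      rw [Finset.sum_range_succ' (fun i =>
        C ((-1 : ℚ) ^ i * (Nat.choose (d - 1 - i) b) * (Nat.choose (b + i) b))
          * x ^ (M + 1 - i) * y ^ i) M]
      congr 1
      rw [Finset.sum_range_succ]
      have hz : (Nat.choose (d - 1 - (M + 1)) b : ℚ) = 0 := by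
        have e : d - 1 - (M + 1) = b - 1 := by omega
        rw [e, Nat.choose_eq_zero_of_lt (by omega)]; simp
      have hzero : C ((-1 : ℚ) ^ (M + 1) * (Nat.choose (d - 1 - (M + 1)) b)
            * (Nat.choose (b + (M + 1)) b))
          * x ^ (M - M) * y ^ (M + 1) = 0 := by
        rw [hz]; simp
      rw [hzero, add_zero]
      refine sum_congr rfl fun i hi => ?_
      have e : M + 1 - (i + 1) = M - i := by omega
      rw [e]
    -- reindex G₂ sum
    have h4 : (∑ i ∈ range (M + 1 + 1),
        C ((-1 : ℚ) ^ i * (Nat.choose (d - 1 - i) (b - 1)) * (Nat.choose (b - 1 + i) (b - 1))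
            * ((i : ℚ) - 1))
          * x ^ (M + 1 - i) * y ^ i)
        = (∑ i ∈ range (M + 1),
            C ((-1 : ℚ) ^ (i + 1) * (Nat.choose (d - 1 - (i + 1)) (b - 1))
                * (Nat.choose (b - 1 + (i + 1)) (b - 1)) * (((i + 1 : ℕ) : ℚ) - 1))
              * x ^ (M - i) * y ^ (i + 1))
          + C ((-1 : ℚ) ^ 0 * (Nat.choose (d - 1 - 0) (b - 1)) * (Nat.choose (b - 1 + 0) (b - 1))
                * (((0 : ℕ) : ℚ) - 1))
              * x ^ (M + 1 - 0) * y ^ 0 := by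
      rw [Finset.sum_range_succ' (fun i =>
        C ((-1 : ℚ) ^ i * (Nat.choose (d - 1 - i) (b - 1)) * (Nat.choose (b - 1 + i) (b - 1))
            * ((i : ℚ) - 1))
          * x ^ (M + 1 - i) * y ^ i) (M + 1)]
      congr 1
      refine sum_congr rfl fun i hi => ?_
      have : M + 1 - (i + 1) = M - i := by omega
      rw [this]
    rw [h1, h4]
    -- main termwise sum identity
    have hmain : C (b : ℚ) * (∑ i ∈ range (M + 1),
          C ((-1 : ℚ) ^ (i + 1) * (Nat.choose (d - 1 - (i + 1)) b) * (Nat.choose (b + (i + 1)) b))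
            * x ^ (M - i) * y ^ (i + 1))
        + C (b : ℚ) * (∑ i ∈ range (M + 1),
          C ((-1 : ℚ) ^ i * (Nat.choose (d - 1 - i) b) * (Nat.choose (b + i) b))
            * x ^ (M - i) * y ^ (i + 1))
        = C ((b : ℚ) * ((b : ℚ) + 2 - d)) * (∑ i ∈ range (M + 1),
          C ((-1 : ℚ) ^ i * (Nat.choose (d - 2 - i) (b - 1)) * (Nat.choose (b + i) b))
            * x ^ (M - i) * y ^ (i + 1))
        + C ((b : ℚ) - d) * (∑ i ∈ range (M + 1),
          C ((-1 : ℚ) ^ (i + 1) * (Nat.choose (d - 1 - (i + 1)) (b - 1))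
              * (Nat.choose (b - 1 + (i + 1)) (b - 1)) * (((i + 1 : ℕ) : ℚ) - 1))
            * x ^ (M - i) * y ^ (i + 1)) := by
      rw [Finset.mul_sum, Finset.mul_sum, Finset.mul_sum, Finset.mul_sum,
        ← Finset.sum_add_distrib, ← Finset.sum_add_distrib]
      refine sum_congr rfl fun i hi => ?_
      have hiM : i ≤ M := by have := mem_range.mp hi; omega
      have hkey := scalarS d b i hb (by omega)
      have hc := congrArg (MvPolynomial.C (σ := Fin 2) (R := ℚ)) hkey
      simp only [map_add, map_mul, map_sub, map_pow, map_neg, map_one, map_natCast,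
        map_ofNat] at hc ⊢
      push_cast at hc ⊢
      linear_combination (x ^ (M - i) * y ^ (i + 1)) * hc
    -- boundary term
    have hbound : C (b : ℚ) *
          (C ((-1 : ℚ) ^ 0 * (Nat.choose (d - 1 - 0) b) * (Nat.choose (b + 0) b))
            * x ^ (M + 1 - 0) * y ^ 0)
        = C ((b : ℚ) - d) *
          (C ((-1 : ℚ) ^ 0 * (Nat.choose (d - 1 - 0) (b - 1)) * (Nat.choose (b - 1 + 0) (b - 1))
              * (((0 : ℕ) : ℚ) - 1))
            * x ^ (M + 1 - 0) * y ^ 0) := by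
      have hs := scalar0 d b hb hbd
      have hc := congrArg (MvPolynomial.C (σ := Fin 2) (R := ℚ)) hs
      simp only [map_mul, map_sub, map_natCast] at hc
      simp only [pow_zero, one_mul, mul_one, Nat.sub_zero, Nat.add_zero, Nat.choose_self,
        Nat.cast_one, Nat.cast_zero, zero_sub, mul_neg, map_mul, map_neg, map_natCast,
        map_sub]
      linear_combination (x ^ (M + 1) * y ^ 0) * hc
    linear_combination hmain + hbound
  · -- degenerate case: d ≤ b
    have hdb : d - b = 0 := by omega
    rw [hdb]
    simp only [range_zero, sum_empty, mul_zero, zero_add, Finset.sum_range_one]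
    rcases eq_or_lt_of_le (show d ≤ b by omega) with h | h
    · have hz : (b : ℚ) - d = 0 := by rw [h]; ring
      rw [hz]
      simp
    · have hz : (Nat.choose (d - 1 - 0) (b - 1)) = 0 :=
        Nat.choose_eq_zero_of_lt (by omega)
      rw [hz]
      simp
end

section
/- Let d₂ ≥ 2, a ≥ 1 odd, and n ≥ 0. Define F_{1,d₂,a,n} = Σ_i (-1)^i binom(d₂-1-i, (a-1)/2 + n) binom((a-1)/2 + i, (a-1)/2) x^{d₂ - (a+1)/2 - n - i} y^i. Then the n-th partial derivative of F_{1,d₂,a,0} with respect to x equals (∏_{j=1}^{n} ((a−1)/2 + j)) · F_{1,d₂,a,n}. -/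
open MvPolynomial Finset

lemma pd_term (c : ℚ) (e i : ℕ) : pderiv (0 : Fin 2) (C c * (X 0 : MvPolynomial (Fin 2) ℚ) ^ e * X 1 ^ i)
    = C (c * e) * X 0 ^ (e - 1) * X 1 ^ i := by
  simp [pderiv_mul, pderiv_pow, pderiv_X]
  ring

lemma step (d₂ b m : ℕ) :
    pderiv (0 : Fin 2) (∑ i ∈ range (d₂ - b - m),
      C ((-1 : ℚ) ^ i * (Nat.choose (d₂ - 1 - i) (b + m)) * (Nat.choose (b + i) b))
        * (X 0 : MvPolynomial (Fin 2) ℚ) ^ (d₂ - b - 1 - m - i) * (X 1) ^ i)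
    = C ((b : ℚ) + m + 1) * ∑ i ∈ range (d₂ - b - (m + 1)),
      C ((-1 : ℚ) ^ i * (Nat.choose (d₂ - 1 - i) (b + (m + 1))) * (Nat.choose (b + i) b))
        * (X 0 : MvPolynomial (Fin 2) ℚ) ^ (d₂ - b - 1 - (m + 1) - i) * (X 1) ^ i := by
  rw [map_sum, Finset.mul_sum]
  have hterm : ∀ i : ℕ,
      pderiv (0 : Fin 2) (C ((-1 : ℚ) ^ i * (Nat.choose (d₂ - 1 - i) (b + m)) * (Nat.choose (b + i) b))
        * (X 0 : MvPolynomial (Fin 2) ℚ) ^ (d₂ - b - 1 - m - i) * (X 1) ^ i)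
      = C ((b : ℚ) + m + 1) * (C ((-1 : ℚ) ^ i * (Nat.choose (d₂ - 1 - i) (b + (m + 1))) * (Nat.choose (b + i) b))
        * (X 0 : MvPolynomial (Fin 2) ℚ) ^ (d₂ - b - 1 - (m + 1) - i) * (X 1) ^ i) := by
    intro i
    rw [pd_term]
    have he : d₂ - b - 1 - m - i - 1 = d₂ - b - 1 - (m + 1) - i := by omega
    have key : Nat.choose (d₂ - 1 - i) (b + m) * (d₂ - b - 1 - m - i)
        = Nat.choose (d₂ - 1 - i) (b + m + 1) * (b + m + 1) := by
      rw [Nat.choose_succ_right_eq]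
      congr 1
      omega
    have keyQ : ((Nat.choose (d₂ - 1 - i) (b + m) : ℚ)) * ((d₂ - b - 1 - m - i : ℕ) : ℚ)
        = (Nat.choose (d₂ - 1 - i) (b + m + 1) : ℚ) * ((b : ℚ) + m + 1) := by
      have := congrArg (Nat.cast : ℕ → ℚ) key
      push_cast at this
      linarith [this]
    have hc : (-1 : ℚ) ^ i * (Nat.choose (d₂ - 1 - i) (b + m)) * (Nat.choose (b + i) b)
        * ((d₂ - b - 1 - m - i : ℕ) : ℚ)
        = ((b : ℚ) + m + 1) * ((-1 : ℚ) ^ i * (Nat.choose (d₂ - 1 - i) (b + (m + 1))) * (Nat.choose (b + i) b)) := by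
      have hbm : b + (m + 1) = b + m + 1 := by omega
      rw [hbm]
      linear_combination ((-1 : ℚ) ^ i * (Nat.choose (b + i) b)) * keyQ
    rw [he, hc, C_mul]
    ring
  rcases Nat.eq_zero_or_pos (d₂ - b - m) with h0 | hpos
  · have h1 : d₂ - b - (m + 1) = 0 := by omega
    simp [h0, h1]
  · obtain ⟨N, hN⟩ : ∃ N, d₂ - b - m = N + 1 := ⟨d₂ - b - m - 1, by omega⟩
    have hN' : d₂ - b - (m + 1) = N := by omega
    rw [hN, hN', Finset.sum_range_succ]
    have hzero : pderiv (0 : Fin 2) (C ((-1 : ℚ) ^ N * (Nat.choose (d₂ - 1 - N) (b + m)) * (Nat.choose (b + N) b))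
        * (X 0 : MvPolynomial (Fin 2) ℚ) ^ (d₂ - b - 1 - m - N) * (X 1) ^ N) = 0 := by
      rw [hterm]
      have : Nat.choose (d₂ - 1 - N) (b + (m + 1)) = 0 := by
        apply Nat.choose_eq_zero_of_lt
        omega
      simp [this]
    rw [hzero, add_zero]
    exact Finset.sum_congr rfl fun i _ => hterm i


/-- The n-th x-partial derivative of `F_{1,d₂,a,0}` equals `(∏_{j=1}^n ((a-1)/2+j)) F_{1,d₂,a,n}`,
for odd `a = 2b+1`. -/
theorem stmt_11 (d₂ a b n : ℕ) (hd₂ : 2 ≤ d₂) (ha : 1 ≤ a) (hab : a = 2 * b + 1) :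
    let F : ℕ → MvPolynomial (Fin 2) ℚ := fun m => ∑ i ∈ range (d₂ - b - m),
      C ((-1 : ℚ) ^ i * (Nat.choose (d₂ - 1 - i) (b + m)) * (Nat.choose (b + i) b))
        * (X 0 : MvPolynomial (Fin 2) ℚ) ^ (d₂ - b - 1 - m - i) * (X 1) ^ i
    (MvPolynomial.pderiv (0 : Fin 2))^[n] (F 0)
      = C (∏ j ∈ range n, ((b : ℚ) + j + 1)) * F n := by
  intro F
  induction n with
  | zero => simp
  | succ n ih =>
      rw [Function.iterate_succ_apply', ih, pderiv_mul, pderiv_C, zero_mul, zero_add]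
      have hs : pderiv (0 : Fin 2) (F n) = C ((b : ℚ) + n + 1) * F (n + 1) := step d₂ b n
      rw [hs, Finset.prod_range_succ, C_mul, mul_comm (C ((b:ℚ)+n+1)) (F (n+1))]
      ring
end

section
/- Let P = ℚ[x,y], let 2 ≤ d₁ ≤ d₂, k = d₂ − d₁, and a > k. If f ∈ (x^{d₁+k}, y^{d₂}) : (x+y)^{a−k}, then for every 0 ≤ j ≤ k, the j-th partial derivative ∂^j f/∂x^j belongs to (x^{d₁+k−j}, y^{d₂}) : (x+y)^{a−k+j}. In particular ∂^k f/∂x^k ∈ (x^{d₁}, y^{d₂}) : (x+y)^a. -/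
open MvPolynomial

lemma key (m d e : ℕ) (g : MvPolynomial (Fin 2) ℚ)
    (h : g * (X 0 + X 1) ^ (e + 1)
      ∈ Ideal.span {(X 0 : MvPolynomial (Fin 2) ℚ) ^ (m + 1), (X 1) ^ d}) :
    pderiv (0 : Fin 2) g * (X 0 + X 1) ^ (e + 2)
      ∈ Ideal.span {(X 0 : MvPolynomial (Fin 2) ℚ) ^ m, (X 1) ^ d} := by
  rw [Ideal.mem_span_pair] at h ⊢
  obtain ⟨p, q, hpq⟩ := h
  have heq := congrArg (pderiv (0 : Fin 2)) hpq
  simp only [map_add, pderiv_mul, Derivation.leibniz_pow, pderiv_X, smul_eq_mul,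
    nsmul_eq_mul, Pi.single_eq_same, Pi.single_eq_of_ne (by decide : (1:Fin 2) ≠ 0),
    Nat.add_sub_cancel] at heq
  push_cast at heq
  refine ⟨(X 0 + X 1) * pderiv (0 : Fin 2) p * X 0 + ((m : MvPolynomial (Fin 2) ℚ) + 1) * (X 0 + X 1) * p
      - ((e : MvPolynomial (Fin 2) ℚ) + 1) * p * X 0,
    (X 0 + X 1) * pderiv (0 : Fin 2) q - ((e : MvPolynomial (Fin 2) ℚ) + 1) * q, ?_⟩
  linear_combination (X 0 + X 1) * heq - ((e : MvPolynomial (Fin 2) ℚ) + 1) * hpq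

theorem stmt_12 (d₁ d₂ a k : ℕ) (hd₁ : 2 ≤ d₁) (h12 : d₁ ≤ d₂) (hk : k = d₂ - d₁)
    (ha : k < a) (f : MvPolynomial (Fin 2) ℚ)
    (hf : f * (X 0 + X 1) ^ (a - k)
      ∈ Ideal.span {(X 0 : MvPolynomial (Fin 2) ℚ) ^ (d₁ + k), (X 1) ^ d₂}) :
    (∀ j : ℕ, j ≤ k →
      (MvPolynomial.pderiv (0 : Fin 2))^[j] f * (X 0 + X 1) ^ (a - k + j)
        ∈ Ideal.span {(X 0 : MvPolynomial (Fin 2) ℚ) ^ (d₁ + k - j), (X 1) ^ d₂}) ∧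
    (MvPolynomial.pderiv (0 : Fin 2))^[k] f * (X 0 + X 1) ^ a
      ∈ Ideal.span {(X 0 : MvPolynomial (Fin 2) ℚ) ^ d₁, (X 1) ^ d₂} := by
  have main : ∀ j : ℕ, j ≤ k →
      (MvPolynomial.pderiv (0 : Fin 2))^[j] f * (X 0 + X 1) ^ (a - k + j)
        ∈ Ideal.span {(X 0 : MvPolynomial (Fin 2) ℚ) ^ (d₁ + k - j), (X 1) ^ d₂} := by
    intro j
    induction j with
    | zero => intro _; simpa using hf
    | succ n ih =>
      intro hj
      have h1 := ih (by omega)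
      have he : a - k + n = (a - k + n - 1) + 1 := by omega
      have hm : d₁ + k - n = (d₁ + k - (n + 1)) + 1 := by omega
      rw [he, hm] at h1
      have h2 := key (d₁ + k - (n + 1)) d₂ (a - k + n - 1) _ h1
      have he2 : a - k + (n + 1) = (a - k + n - 1) + 2 := by omega
      rw [Function.iterate_succ_apply', he2]
      exact h2
  refine ⟨main, ?_⟩
  have := main k le_rfl
  rw [show a - k + k = a by omega, Nat.add_sub_cancel] at this
  exact this
end

section
/- Let 2 ≤ d₁ ≤ d₂, k = d₂ − d₁, and 1 ≤ a < k, and set H_a = y^{k−a+1} Σ_{i=0}^{d₁−1} (-1)^i binom(d₁+a−2−i, a−1) x^{d₁−1−i} y^i in ℚ[x,y]. Then (x+y)·H_{a+1} ≡ H_a modulo the ideal (x^{d₁}). -/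
open MvPolynomial Finset

theorem stmt_14 (d₁ d₂ a k : ℕ) (hd₁ : 2 ≤ d₁) (h12 : d₁ ≤ d₂) (hk : k = d₂ - d₁)
    (ha : 1 ≤ a) (hak : a < k) :
    let x : MvPolynomial (Fin 2) ℚ := X 0
    let y : MvPolynomial (Fin 2) ℚ := X 1
    let H : ℕ → MvPolynomial (Fin 2) ℚ := fun b => y ^ (k - b + 1) * ∑ i ∈ range d₁,
      C ((-1 : ℚ) ^ i * (Nat.choose (d₁ + b - 2 - i) (b - 1))) * x ^ (d₁ - 1 - i) * y ^ i
    (x + y) * H (a + 1) - H a ∈ Ideal.span {x ^ d₁} := by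
  intro x y H
  set S₁ : MvPolynomial (Fin 2) ℚ := ∑ i ∈ range d₁,
      C ((-1 : ℚ) ^ i * (Nat.choose (d₁ + (a+1) - 2 - i) ((a+1) - 1))) * x ^ (d₁ - 1 - i) * y ^ i
    with hS₁
  set S₀ : MvPolynomial (Fin 2) ℚ := ∑ i ∈ range d₁,
      C ((-1 : ℚ) ^ i * (Nat.choose (d₁ + a - 2 - i) (a - 1))) * x ^ (d₁ - 1 - i) * y ^ i
    with hS₀
  have key : (x + y) * S₁ - y * S₀ = C (((d₁ + a - 1).choose a : ℚ)) * x ^ d₁ := by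
    have hx : x * S₁ = C (((d₁ + a - 1).choose a : ℚ)) * x ^ d₁ +
        ∑ i ∈ range d₁,
          (C ((-1 : ℚ) ^ i * (Nat.choose (d₁ + a - 2 - i) (a - 1)))
            - C ((-1 : ℚ) ^ i * (Nat.choose (d₁ + (a+1) - 2 - i) ((a+1) - 1))))
            * x ^ (d₁ - 1 - i) * y ^ (i + 1) := by
      obtain ⟨m, hm⟩ : ∃ m, d₁ = m + 1 := ⟨d₁ - 1, by omega⟩
      rw [hS₁, Finset.mul_sum]
      have step1 : ∀ i ∈ range d₁,
          x * (C ((-1 : ℚ) ^ i * (Nat.choose (d₁ + (a+1) - 2 - i) ((a+1) - 1))) * x ^ (d₁ - 1 - i) * y ^ i)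
          = C ((-1 : ℚ) ^ i * (Nat.choose (d₁ + (a+1) - 2 - i) ((a+1) - 1))) * x ^ (d₁ - i) * y ^ i := by
        intro i hi
        simp only [mem_range] at hi
        have : d₁ - i = (d₁ - 1 - i) + 1 := by omega
        rw [this, pow_succ]
        ring
      rw [Finset.sum_congr rfl step1]
      rw [hm, Finset.sum_range_succ' (fun i => C ((-1 : ℚ) ^ i * (Nat.choose (m + 1 + (a+1) - 2 - i) ((a+1) - 1))) * x ^ (m + 1 - i) * y ^ i) m]
      have h0 : C ((-1 : ℚ) ^ 0 * (Nat.choose (m + 1 + (a+1) - 2 - 0) ((a+1) - 1))) * x ^ (m + 1 - 0) * y ^ 0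
          = C (((m + 1 + a - 1).choose a : ℚ)) * x ^ (m+1) := by
        have : m + 1 + (a+1) - 2 - 0 = m + 1 + a - 1 := by omega
        rw [this]
        simp
      rw [h0, add_comm]
      congr 1
      -- extend the shifted sum from range m to range (m+1) and match termwise
      rw [Finset.sum_range_succ]
      have hz : (C ((-1 : ℚ) ^ m * (Nat.choose (m + 1 + a - 2 - m) (a - 1)))
            - C ((-1 : ℚ) ^ m * (Nat.choose (m + 1 + (a+1) - 2 - m) ((a+1) - 1))))
            * x ^ (m + 1 - 1 - m) * y ^ (m + 1) = 0 := by
        have e1 : m + 1 + a - 2 - m = a - 1 := by omega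
        have e2 : m + 1 + (a+1) - 2 - m = a := by omega
        rw [e1, e2]
        have : (a-1).choose (a-1) = 1 := Nat.choose_self _
        have h2 : a.choose ((a+1)-1) = 1 := by simp [Nat.choose_self]
        rw [this, h2]
        simp
      rw [hz, add_zero]
      apply Finset.sum_congr rfl
      intro i hi
      simp only [mem_range] at hi
      have e1 : m + 1 - (i + 1) = m + 1 - 1 - i := by omega
      have e2 : m + 1 + (a+1) - 2 - (i+1) = m + 1 + a - 2 - i := by omega
      have e3 : m + 1 + (a+1) - 2 - i = (m + 1 + a - 2 - i) + 1 := by omega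
      rw [e1, e2]
      have pascal : ((m + 1 + a - 2 - i) + 1).choose ((a+1)-1)
          = (m + 1 + a - 2 - i).choose (a - 1) + (m + 1 + a - 2 - i).choose ((a+1)-1) := by
        have ha' : (a + 1) - 1 = (a - 1) + 1 := by omega
        rw [ha', Nat.choose_succ_succ]
      have hc : ((-1:ℚ)) ^ (i+1) * ((m + 1 + a - 2 - i).choose ((a+1)-1) : ℚ)
          = (-1:ℚ) ^ i * ((m + 1 + a - 2 - i).choose (a-1) : ℚ)
            - (-1:ℚ) ^ i * ((m + 1 + (a+1) - 2 - i).choose ((a+1)-1) : ℚ) := by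
        rw [e3, pascal]
        push_cast
        ring
      rw [hc, C_sub]
    calc (x + y) * S₁ - y * S₀ = x * S₁ + (y * S₁ - y * S₀) := by ring
      _ = C (((d₁ + a - 1).choose a : ℚ)) * x ^ d₁ := by
        rw [hx, hS₁, hS₀, Finset.mul_sum, Finset.mul_sum, ← Finset.sum_sub_distrib,
          add_assoc, ← Finset.sum_add_distrib]
        have : ∀ i ∈ range d₁,
            (C ((-1 : ℚ) ^ i * (Nat.choose (d₁ + a - 2 - i) (a - 1)))
              - C ((-1 : ℚ) ^ i * (Nat.choose (d₁ + (a+1) - 2 - i) ((a+1) - 1))))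
              * x ^ (d₁ - 1 - i) * y ^ (i + 1)
            + (y * (C ((-1 : ℚ) ^ i * (Nat.choose (d₁ + (a+1) - 2 - i) ((a+1) - 1))) * x ^ (d₁ - 1 - i) * y ^ i)
              - y * (C ((-1 : ℚ) ^ i * (Nat.choose (d₁ + a - 2 - i) (a - 1))) * x ^ (d₁ - 1 - i) * y ^ i)) = 0 := by
          intro i hi
          rw [pow_succ]
          ring
        rw [Finset.sum_congr rfl this]
        simp
  rw [Ideal.mem_span_singleton]
  refine ⟨C (((d₁ + a - 1).choose a : ℚ)) * y ^ (k - a), ?_⟩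
  show (x + y) * (y ^ (k - (a+1) + 1) * S₁) - y ^ (k - a + 1) * S₀ = _
  have e1 : k - (a+1) + 1 = k - a := by omega
  have e2 : k - a + 1 = (k - a) + 1 := rfl
  rw [e1, e2]
  calc (x + y) * (y ^ (k - a) * S₁) - y ^ ((k - a) + 1) * S₀
      = y ^ (k - a) * ((x + y) * S₁ - y * S₀) := by rw [pow_succ]; ring
    _ = _ := by rw [key]; ring
end

section
/- In ℚ[x,y,z], let L = x + y + z, and let φ : ℚ[x,y,z] → ℚ[x,y] be the ring homomorphism fixing x, y and sending z to −(x+y). Suppose F·L = A x^{d₁} + B y^{d₂} + C z^{d₃} + D x^{a₁} y^{a₂} z^{a₃} is a homogeneous relation with 0 < a_j < d_j, and suppose φ(D) ∈ (x^{d₁−a₁}, y^{d₂−a₂}, (x+y)^{d₃−a₃}) in ℚ[x,y]. Then, assuming that multiplication by L has maximal rank on ℚ[x,y,z]/(x^{d₁}, y^{d₂}, z^{d₃}) in the relevant degree (WLP of the monomial complete intersection) and that deg F + 1 is at most the degree where injectivity of ×L holds, F ∈ (x^{d₁}, y^{d₂}, z^{d₃}, x^{a₁} y^{a₂} z^{a₃}).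 -/
open MvPolynomial

attribute [local instance] MvPolynomial.gradedAlgebra

lemma hc_mul' {σ : Type*} (p q : MvPolynomial σ ℚ) (m n : ℕ) (hq : q.IsHomogeneous m) :
    homogeneousComponent (n + m) (p * q) = homogeneousComponent n p * q := by
  classical
  conv_lhs => rw [← p.sum_homogeneousComponent, Finset.sum_mul, map_sum]
  have h : ∀ i ∈ Finset.range (p.totalDegree + 1),
      homogeneousComponent (n + m) (homogeneousComponent i p * q)
        = if n = i then homogeneousComponent i p * q else 0 := by
    intro i _
    rw [homogeneousComponent_of_mem
      ((mem_homogeneousSubmodule _ _).2 ((homogeneousComponent_isHomogeneous i p).mul hq))]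
    simp [Nat.add_right_cancel_iff]
  rw [Finset.sum_congr rfl h, Finset.sum_ite_eq]
  split
  · rfl
  · rw [homogeneousComponent_eq_zero, zero_mul]
    rename_i hn; simp only [Finset.mem_range, Nat.lt_succ_iff, not_le] at hn; exact hn

lemma ker_L (P : MvPolynomial (Fin 3) ℚ)
    (h : aeval ![X 0, X 1, -(X 0 + X 1)] P = (0 : MvPolynomial (Fin 2) ℚ)) :
    ∃ Q, P = (X 0 + X 1 + X 2) * Q := by
  classical
  set T := (renameEquiv ℚ (Equiv.swap (0 : Fin 3) 2)).trans (finSuccEquiv ℚ 2) with hT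
  set c : MvPolynomial (Fin 2) ℚ := -(X 0 + X 1) with hc
  have e1 : (X (1 : Fin 3) : MvPolynomial (Fin 3) ℚ) = X ((0 : Fin 2).succ) := rfl
  have e2 : (X (2 : Fin 3) : MvPolynomial (Fin 3) ℚ) = X ((1 : Fin 2).succ) := rfl
  have ea : Polynomial.eval c = (Polynomial.aeval c :
      Polynomial (MvPolynomial (Fin 2) ℚ) → MvPolynomial (Fin 2) ℚ) :=
    (Polynomial.coe_aeval_eq_eval c).symm
  have hE : ((Polynomial.aeval c).restrictScalars ℚ).comp T.toAlgHom
      = (rename (Equiv.swap (0 : Fin 2) 1)).comp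
        (aeval ![X 0, X 1, -(X 0 + X 1)]) := by
    apply MvPolynomial.algHom_ext
    intro i
    fin_cases i <;>
      simp [hT, hc, e1, e2, Equiv.swap_apply_def, finSuccEquiv_X_zero,
        finSuccEquiv_X_succ] <;> ring
  have hroot : Polynomial.eval c (T P) = 0 := by
    have h2 := DFunLike.congr_fun hE P
    simp only [AlgHom.coe_comp, Function.comp_apply, AlgHom.coe_restrictScalars',
      AlgHom.coe_coe, ← hc, h, map_zero] at h2
    rw [ea]; exact h2
  have hdvd : (Polynomial.X - Polynomial.C c) ∣ T P :=
    (Polynomial.dvd_iff_isRoot).2 hroot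
  have hTL : T (X 0 + X 1 + X 2) = Polynomial.X - Polynomial.C c := by
    simp [hT, hc, e1, e2, Equiv.swap_apply_def, finSuccEquiv_X_zero, finSuccEquiv_X_succ]
    ring
  obtain ⟨q, hq⟩ := hdvd
  refine ⟨T.symm q, ?_⟩
  have : T P = T ((X 0 + X 1 + X 2) * T.symm q) := by
    rw [map_mul, hTL, AlgEquiv.apply_symm_apply, hq]
  exact T.injective this

/-- Lemma 3.2(a): if `F·L = A x^{d₁} + B y^{d₂} + C z^{d₃} + D x^{a₁}y^{a₂}z^{a₃}` is a
homogeneous relation and `φ(D) ∈ (x^{d₁-a₁}, y^{d₂-a₂}, (x+y)^{d₃-a₃})`, then (given WLP of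
the monomial complete intersection in the relevant degree) `F ∈ I`. -/
theorem stmt_16 (d₁ d₂ d₃ a₁ a₂ a₃ : ℕ)
    (h₁ : 0 < a₁) (h₁' : a₁ < d₁) (h₂ : 0 < a₂) (h₂' : a₂ < d₂) (h₃ : 0 < a₃) (h₃' : a₃ < d₃)
    (F A B C D : MvPolynomial (Fin 3) ℚ) (dF : ℕ)
    (hF : MvPolynomial.IsHomogeneous F dF)
    (hA : MvPolynomial.IsHomogeneous A (dF + 1 - d₁))
    (hB : MvPolynomial.IsHomogeneous B (dF + 1 - d₂))
    (hC : MvPolynomial.IsHomogeneous C (dF + 1 - d₃))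
    (hD : MvPolynomial.IsHomogeneous D (dF + 1 - (a₁ + a₂ + a₃)))
    (L : MvPolynomial (Fin 3) ℚ) (hL : L = X 0 + X 1 + X 2)
    (hrel : F * L = A * X 0 ^ d₁ + B * X 1 ^ d₂ + C * X 2 ^ d₃
      + D * X 0 ^ a₁ * X 1 ^ a₂ * X 2 ^ a₃)
    (φ : MvPolynomial (Fin 3) ℚ →ₐ[ℚ] MvPolynomial (Fin 2) ℚ)
    (hφ : φ = MvPolynomial.aeval ![X 0, X 1, -(X 0 + X 1)])
    (hDmem : φ D ∈ Ideal.span {(X 0 : MvPolynomial (Fin 2) ℚ) ^ (d₁ - a₁),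
      (X 1) ^ (d₂ - a₂), (X 0 + X 1) ^ (d₃ - a₃)})
    -- WLP (injectivity of ×L) for the monomial complete intersection in degree dF
    (hWLP : ∀ G : MvPolynomial (Fin 3) ℚ, MvPolynomial.IsHomogeneous G dF →
      G * L ∈ Ideal.span {(X 0 : MvPolynomial (Fin 3) ℚ) ^ d₁, (X 1) ^ d₂, (X 2) ^ d₃} →
      G ∈ Ideal.span {(X 0 : MvPolynomial (Fin 3) ℚ) ^ d₁, (X 1) ^ d₂, (X 2) ^ d₃}) :
    F ∈ Ideal.span {(X 0 : MvPolynomial (Fin 3) ℚ) ^ d₁, (X 1) ^ d₂, (X 2) ^ d₃,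
      X 0 ^ a₁ * X 1 ^ a₂ * X 2 ^ a₃} := by
  classical
  -- extract coefficients from hDmem
  simp only [Ideal.mem_span_insert, Ideal.mem_span_singleton] at hDmem
  obtain ⟨u, r, ⟨v, r', ⟨w, hw⟩, hr'⟩, hDspan⟩ := hDmem
  rw [hw] at hr'; rw [hr'] at hDspan
  -- section of φ
  have φs : ∀ p : MvPolynomial (Fin 2) ℚ, φ (aeval ![X 0, X 1] p) = p := by
    intro p
    have hcomp : φ.comp (aeval ![(X 0 : MvPolynomial (Fin 3) ℚ), X 1]) = AlgHom.id ℚ _ := by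
      apply algHom_ext; intro i; fin_cases i <;> simp [hφ]
    have := DFunLike.congr_fun hcomp p
    simpa using this
  have hx0 : φ (X 0) = X 0 := by simp [hφ]
  have hx1 : φ (X 1) = X 1 := by simp [hφ]
  have hx2 : φ (X 2) = -(X 0 + X 1) := by simp [hφ]
  -- the lift G
  set G : MvPolynomial (Fin 3) ℚ :=
    aeval ![X 0, X 1] u * X 0 ^ (d₁ - a₁) + aeval ![X 0, X 1] v * X 1 ^ (d₂ - a₂)
      + (-1 : MvPolynomial (Fin 3) ℚ) ^ (d₃ - a₃) * aeval ![X 0, X 1] w * X 2 ^ (d₃ - a₃)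
    with hG
  have hne : ((-1 : MvPolynomial (Fin 2) ℚ)) ^ (d₃ - a₃) * (-(X 0 + X 1)) ^ (d₃ - a₃)
      = (X 0 + X 1) ^ (d₃ - a₃) := by
    rw [← mul_pow, neg_one_mul, neg_neg]
  have hGφ : φ G = u * X 0 ^ (d₁ - a₁) + (v * X 1 ^ (d₂ - a₂)
      + (X 0 + X 1) ^ (d₃ - a₃) * w) := by
    simp only [hG, map_add, map_mul, map_pow, hx0, hx1, hx2, φs, map_neg, map_one]
    linear_combination w * hne
  have hker : φ (D - G) = 0 := by
    rw [map_sub, hDspan, hGφ, sub_self]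
  obtain ⟨M, hM⟩ := ker_L (D - G) (by rw [← hφ]; exact hker)
  -- key relation
  have key : (F - M * (X 0 ^ a₁ * X 1 ^ a₂ * X 2 ^ a₃)) * L
      = A * X 0 ^ d₁ + B * X 1 ^ d₂ + C * X 2 ^ d₃
        + G * (X 0 ^ a₁ * X 1 ^ a₂ * X 2 ^ a₃) := by
    have hDG : D = G + L * M := by rw [hL]; linear_combination hM
    rw [hDG] at hrel
    linear_combination hrel
  set I3 : Ideal (MvPolynomial (Fin 3) ℚ) :=
    Ideal.span {X 0 ^ d₁, X 1 ^ d₂, X 2 ^ d₃} with hI3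
  have mem1 : (X 0 : MvPolynomial (Fin 3) ℚ) ^ d₁ ∈ I3 := Ideal.subset_span (by simp)
  have mem2 : (X 1 : MvPolynomial (Fin 3) ℚ) ^ d₂ ∈ I3 := Ideal.subset_span (by simp)
  have mem3 : (X 2 : MvPolynomial (Fin 3) ℚ) ^ d₃ ∈ I3 := Ideal.subset_span (by simp)
  have hGm : G * (X 0 ^ a₁ * X 1 ^ a₂ * X 2 ^ a₃) ∈ I3 := by
    have p1 : (X 0 : MvPolynomial (Fin 3) ℚ) ^ (d₁ - a₁) * X 0 ^ a₁ = X 0 ^ d₁ := by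
      rw [← pow_add, Nat.sub_add_cancel h₁'.le]
    have p2 : (X 1 : MvPolynomial (Fin 3) ℚ) ^ (d₂ - a₂) * X 1 ^ a₂ = X 1 ^ d₂ := by
      rw [← pow_add, Nat.sub_add_cancel h₂'.le]
    have p3 : (X 2 : MvPolynomial (Fin 3) ℚ) ^ (d₃ - a₃) * X 2 ^ a₃ = X 2 ^ d₃ := by
      rw [← pow_add, Nat.sub_add_cancel h₃'.le]
    have hsplit : G * (X 0 ^ a₁ * X 1 ^ a₂ * X 2 ^ a₃)
        = (aeval ![X 0, X 1] u * X 1 ^ a₂ * X 2 ^ a₃) * X 0 ^ d₁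
          + (aeval ![X 0, X 1] v * X 0 ^ a₁ * X 2 ^ a₃) * X 1 ^ d₂
          + ((-1) ^ (d₃ - a₃) * aeval ![X 0, X 1] w * X 0 ^ a₁ * X 1 ^ a₂) * X 2 ^ d₃ := by
      rw [hG, ← p1, ← p2, ← p3]; ring
    rw [hsplit]
    exact add_mem (add_mem (Ideal.mul_mem_left _ _ mem1) (Ideal.mul_mem_left _ _ mem2))
      (Ideal.mul_mem_left _ _ mem3)
  have hHL : (F - M * (X 0 ^ a₁ * X 1 ^ a₂ * X 2 ^ a₃)) * L ∈ I3 := by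
    rw [key]
    exact add_mem (add_mem (add_mem (Ideal.mul_mem_left _ _ mem1)
      (Ideal.mul_mem_left _ _ mem2)) (Ideal.mul_mem_left _ _ mem3)) hGm
  -- homogeneity of I3
  have hI3hom : I3.IsHomogeneous (homogeneousSubmodule (Fin 3) ℚ) := by
    apply Ideal.homogeneous_span
    rintro x hx
    simp only [Set.mem_insert_iff, Set.mem_singleton_iff] at hx
    rcases hx with rfl | rfl | rfl
    · exact ⟨1 * d₁, (mem_homogeneousSubmodule _ _).2 ((isHomogeneous_X _ _).pow _)⟩
    · exact ⟨1 * d₂, (mem_homogeneousSubmodule _ _).2 ((isHomogeneous_X _ _).pow _)⟩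
    · exact ⟨1 * d₃, (mem_homogeneousSubmodule _ _).2 ((isHomogeneous_X _ _).pow _)⟩
  have hLhom : L.IsHomogeneous 1 := by
    rw [hL]
    exact ((isHomogeneous_X _ _).add (isHomogeneous_X _ _)).add (isHomogeneous_X _ _)
  -- project to degree dF
  have hproj : homogeneousComponent dF (F - M * (X 0 ^ a₁ * X 1 ^ a₂ * X 2 ^ a₃)) * L ∈ I3 := by
    have h1 := hI3hom (dF + 1) hHL
    rwa [show ((DirectSum.decompose (homogeneousSubmodule (Fin 3) ℚ)
        ((F - M * (X 0 ^ a₁ * X 1 ^ a₂ * X 2 ^ a₃)) * L)) (dF + 1) : MvPolynomial (Fin 3) ℚ)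
        = homogeneousComponent (dF + 1) ((F - M * (X 0 ^ a₁ * X 1 ^ a₂ * X 2 ^ a₃)) * L)
        from MvPolynomial.decomposition.decompose'_apply _ _,
      hc_mul' _ _ 1 dF hLhom] at h1
  have hH' := hWLP _ (homogeneousComponent_isHomogeneous _ _) hproj
  -- the monomial ideal
  have hmono : (Ideal.span {(X 0 : MvPolynomial (Fin 3) ℚ) ^ a₁ * X 1 ^ a₂
      * X 2 ^ a₃}).IsHomogeneous (homogeneousSubmodule (Fin 3) ℚ) := by
    apply Ideal.homogeneous_span
    rintro x hx
    simp only [Set.mem_singleton_iff] at hx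
    subst hx
    exact ⟨1 * a₁ + 1 * a₂ + 1 * a₃, (mem_homogeneousSubmodule _ _).2
      ((((isHomogeneous_X _ _).pow _).mul ((isHomogeneous_X _ _).pow _)).mul
        ((isHomogeneous_X _ _).pow _))⟩
  have hMm : homogeneousComponent dF (M * (X 0 ^ a₁ * X 1 ^ a₂ * X 2 ^ a₃))
      ∈ Ideal.span {(X 0 : MvPolynomial (Fin 3) ℚ) ^ a₁ * X 1 ^ a₂ * X 2 ^ a₃} := by
    have hmem : M * (X 0 ^ a₁ * X 1 ^ a₂ * X 2 ^ a₃)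
        ∈ Ideal.span {(X 0 : MvPolynomial (Fin 3) ℚ) ^ a₁ * X 1 ^ a₂ * X 2 ^ a₃} :=
      Ideal.mul_mem_left _ _ (Ideal.subset_span rfl)
    have := hmono dF hmem
    rwa [show ((DirectSum.decompose (homogeneousSubmodule (Fin 3) ℚ)
        (M * (X 0 ^ a₁ * X 1 ^ a₂ * X 2 ^ a₃))) dF : MvPolynomial (Fin 3) ℚ)
        = homogeneousComponent dF (M * (X 0 ^ a₁ * X 1 ^ a₂ * X 2 ^ a₃))
        from MvPolynomial.decomposition.decompose'_apply _ _] at this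
  -- conclude
  have hFsplit : F = homogeneousComponent dF (F - M * (X 0 ^ a₁ * X 1 ^ a₂ * X 2 ^ a₃))
      + homogeneousComponent dF (M * (X 0 ^ a₁ * X 1 ^ a₂ * X 2 ^ a₃)) := by
    have hFhc : homogeneousComponent dF F = F := by
      rw [homogeneousComponent_of_mem ((mem_homogeneousSubmodule _ _).2 hF)]; simp
    rw [← map_add]
    rw [show F - M * (X 0 ^ a₁ * X 1 ^ a₂ * X 2 ^ a₃)
      + M * (X 0 ^ a₁ * X 1 ^ a₂ * X 2 ^ a₃) = F by ring, hFhc]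
  rw [hFsplit]
  refine add_mem (Ideal.span_mono ?_ hH') (Ideal.span_mono ?_ hMm)
  · intro x hx
    simp only [Set.mem_insert_iff, Set.mem_singleton_iff] at hx ⊢
    tauto
  · intro x hx
    simp only [Set.mem_insert_iff, Set.mem_singleton_iff] at hx ⊢
    tauto
end

section
/- Let S and P be positive integers with S ≥ 2 satisfying S³ − 4S² + 3S = (4S − 10)·P, and suppose P = a₁a₂, S = a₁ + a₂ for positive integers 2 ≤ a₁ ≤ a₂. Then (a₁, a₂) = (3, 7). -/
theorem stmt_17 (S P a₁ a₂ : ℤ) (hS : 2 ≤ S) (hP : 0 < P)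
    (heq : S ^ 3 - 4 * S ^ 2 + 3 * S = (4 * S - 10) * P)
    (ha₁ : 2 ≤ a₁) (ha₁₂ : a₁ ≤ a₂) (hSsum : S = a₁ + a₂) (hPprod : P = a₁ * a₂) :
    a₁ = 3 ∧ a₂ = 7 := by
  have h15 : (2 * S - 5) ∣ 15 :=
    ⟨4 * S ^ 2 - 6 * S - 3 - 16 * P, by linear_combination -8 * heq⟩
  have hS10 : S ≤ 10 := by
    by_contra h
    have h1 := Int.le_of_dvd (by norm_num) h15
    omega
  interval_cases S <;>
    first
      | omega
      | (have hb : a₁ ≤ 5 := by omega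
         interval_cases a₁ <;> omega)
end
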